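/- arXiv:2308.11835 — 2 statements merged into one kernel-verified Lean document; each statement's English description precedes it below -/
import Mathlib

section
/- Let P be a probability measure and W ≥ 0 a random variable with 0 < E[W] < ∞, and define the reweighted measure P* = (W/E[W]) dP. For random variables S and A on this space, if under P* the conditional law of S given σ(A) is Q_A weighted by g(S) (normalized), where g ≥ 0 is measurable and W = h(S, A) for a measurable h, then under P the conditional law of S given σ(A) is Q_A weighted by g(S)/h(S,A) (normalized), provided the normalizations are finite and positive a.s. -/
open MeasureTheory

open scoped ENNReal

namespace UndoReweightAux

variable {Ω 𝒮 𝒜 : Type*} {mΩ : MeasurableSpace Ω} {m𝒮 : MeasurableSpace 𝒮}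
  {m𝒜 : MeasurableSpace 𝒜}

variable {Ω 𝒮 𝒜 : Type*} {mΩ : MeasurableSpace Ω} {m𝒮 : MeasurableSpace 𝒮}
  {m𝒜 : MeasurableSpace 𝒜}

lemma ennreal_div_div_div {x y d : ℝ≥0∞} (hd0 : d ≠ 0) (hdt : d ≠ ∞) :
    (x / d) / (y / d) = x / y := by
  rw [div_eq_mul_inv x d, div_eq_mul_inv y d, div_eq_mul_inv,
    ENNReal.mul_inv (Or.inr (ENNReal.inv_ne_top.2 hd0)) (Or.inr (ENNReal.inv_ne_zero.2 hdt)),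
    inv_inv]
  have h : x * d⁻¹ * (y⁻¹ * d) = x * y⁻¹ * (d⁻¹ * d) := by ring
  rw [h, ENNReal.inv_mul_cancel hd0 hdt, mul_one, ← div_eq_mul_inv]

lemma lintegral_mul_eq_of_forall_set {μ : Measure Ω} {m' : MeasurableSpace Ω}
    (hm' : m' ≤ mΩ) {X Y : Ω → ℝ≥0∞} (hX : AEMeasurable X μ) (hY : AEMeasurable Y μ)
    (hset : ∀ B : Set Ω, MeasurableSet[m'] B →
      ∫⁻ ω in B, X ω ∂μ = ∫⁻ ω in B, Y ω ∂μ)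
    {v : Ω → ℝ≥0∞} (hv : Measurable[m'] v) :
    ∫⁻ ω, X ω * v ω ∂μ = ∫⁻ ω, Y ω * v ω ∂μ := by
  refine @Measurable.ennreal_induction Ω m'
    (fun v => ∫⁻ ω, X ω * v ω ∂μ = ∫⁻ ω, Y ω * v ω ∂μ) ?_ ?_ ?_ v hv
  · intro c s hs
    have hind : ∀ Z : Ω → ℝ≥0∞,
        (fun ω => Z ω * s.indicator (fun _ => c) ω) = s.indicator (fun ω => Z ω * c) := by
      intro Z; funext ω; by_cases hω : ω ∈ s <;> simp [Set.indicator_apply, hω]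
    rw [hind X, hind Y, lintegral_indicator (hm' s hs), lintegral_indicator (hm' s hs),
      lintegral_mul_const'' c hX.restrict, lintegral_mul_const'' c hY.restrict, hset s hs]
  · intro v₁ v₂ _ hv₁ hv₂ ih₁ ih₂
    simp only [Pi.add_apply, mul_add]
    rw [lintegral_add_left' (f := fun ω => X ω * v₁ ω) (hX.mul (hv₁.mono hm' le_rfl).aemeasurable),
      lintegral_add_left' (f := fun ω => Y ω * v₁ ω) (hY.mul (hv₁.mono hm' le_rfl).aemeasurable), ih₁, ih₂]
  · intro f hf hmono ih
    simp only [ENNReal.mul_iSup]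
    rw [lintegral_iSup' (f := fun n ω => X ω * f n ω) (fun n => hX.mul ((hf n).mono hm' le_rfl).aemeasurable)
        (Filter.Eventually.of_forall fun ω i j hij => mul_le_mul_right (hmono hij ω) _),
      lintegral_iSup' (f := fun n ω => Y ω * f n ω) (fun n => hY.mul ((hf n).mono hm' le_rfl).aemeasurable)
        (Filter.Eventually.of_forall fun ω i j hij => mul_le_mul_right (hmono hij ω) _)]
    exact iSup_congr ih


lemma key (μ : Measure Ω) [IsFiniteMeasure μ] {S : Ω → 𝒮} {A : Ω → 𝒜}
    (hS : Measurable S) (hA : Measurable A) (ρ : Ω → Measure 𝒮)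
    (hρ1 : ∀ᵐ ω ∂μ, ρ ω Set.univ = 1)
    (hrect : ∀ D : Set 𝒮, MeasurableSet D → ∃ u : Ω → ℝ≥0∞,
      Measurable[MeasurableSpace.comap A m𝒜] u ∧ u =ᵐ[μ] (fun ω => ρ ω D) ∧
      ∀ E : Set 𝒜, MeasurableSet E →
        ∫⁻ ω in A ⁻¹' E, Set.indicator D 1 (S ω) ∂μ = ∫⁻ ω in A ⁻¹' E, ρ ω D ∂μ)
    {φ : 𝒮 × 𝒜 → ℝ≥0∞} (hφ : Measurable φ) :
    ∃ u : Ω → ℝ≥0∞, Measurable[MeasurableSpace.comap A m𝒜] u ∧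
      u =ᵐ[μ] (fun ω => ∫⁻ s, φ (s, A ω) ∂ρ ω) ∧
      ∫⁻ ω, φ (S ω, A ω) ∂μ = ∫⁻ ω, ∫⁻ s, φ (s, A ω) ∂ρ ω ∂μ := by
  have hm' : MeasurableSpace.comap A m𝒜 ≤ mΩ := hA.comap_le
  have hsec : ∀ (D : Set (𝒮 × 𝒜)), MeasurableSet D → ∀ a : 𝒜,
      MeasurableSet {s : 𝒮 | (s, a) ∈ D} := fun D hD a => measurable_prodMk_right hD
  have hpair : Measurable fun ω => (S ω, A ω) := hS.prodMk hA
  have hrepr : ∀ (D : Set (𝒮 × 𝒜)), MeasurableSet D →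
      ∫⁻ ω, Set.indicator D 1 (S ω, A ω) ∂μ = μ ((fun ω => (S ω, A ω)) ⁻¹' D) := by
    intro D hD
    have hpt : ∀ ω, Set.indicator D (1 : 𝒮 × 𝒜 → ℝ≥0∞) (S ω, A ω)
        = Set.indicator ((fun ω => (S ω, A ω)) ⁻¹' D) 1 ω := by
      intro ω; by_cases hω : (S ω, A ω) ∈ D <;> simp [Set.indicator_apply, hω]
    simp only [hpt]
    exact lintegral_indicator_one (hpair hD)
  -- Step 1: indicators of measurable sets in the product
  have hsets : ∀ D : Set (𝒮 × 𝒜), MeasurableSet D →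
      ∃ u : Ω → ℝ≥0∞, Measurable[MeasurableSpace.comap A m𝒜] u ∧
      u =ᵐ[μ] (fun ω => ρ ω {s | (s, A ω) ∈ D}) ∧
      ∫⁻ ω, Set.indicator D 1 (S ω, A ω) ∂μ = ∫⁻ ω, ρ ω {s | (s, A ω) ∈ D} ∂μ := by
    refine MeasurableSpace.induction_on_inter (C := fun D _ =>
        ∃ u : Ω → ℝ≥0∞, Measurable[MeasurableSpace.comap A m𝒜] u ∧
        u =ᵐ[μ] (fun ω => ρ ω {s | (s, A ω) ∈ D}) ∧
        ∫⁻ ω, Set.indicator D 1 (S ω, A ω) ∂μ = ∫⁻ ω, ρ ω {s | (s, A ω) ∈ D} ∂μ)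
      generateFrom_prod.symm isPiSystem_prod ?_ ?_ ?_ ?_
    · refine ⟨0, measurable_const, ?_, ?_⟩
      · refine Filter.Eventually.of_forall fun ω => ?_
        have h0 : {s : 𝒮 | (s, A ω) ∈ (∅ : Set (𝒮 × 𝒜))} = ∅ := by ext s; simp
        simp [h0]
      · have h1 : ∀ ω, Set.indicator (∅ : Set (𝒮 × 𝒜)) (1 : 𝒮 × 𝒜 → ℝ≥0∞) (S ω, A ω) = 0 := by
          intro ω; simp
        have h2 : ∀ ω, ρ ω {s : 𝒮 | (s, A ω) ∈ (∅ : Set (𝒮 × 𝒜))} = 0 := by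
          intro ω
          have h0 : {s : 𝒮 | (s, A ω) ∈ (∅ : Set (𝒮 × 𝒜))} = ∅ := by ext s; simp
          simp [h0]
        simp only [h1, h2]
    · rintro t ⟨D, hD, E, hE, rfl⟩
      obtain ⟨u0, hu0m, hu0ae, hu0int⟩ := hrect D hD
      have hBm' : MeasurableSet[MeasurableSpace.comap A m𝒜] (A ⁻¹' E) := ⟨E, hE, rfl⟩
      refine ⟨(A ⁻¹' E).indicator u0, hu0m.indicator hBm', ?_, ?_⟩
      · filter_upwards [hu0ae] with ω h0
        by_cases hAE : A ω ∈ E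
        · have hsect : {s | (s, A ω) ∈ D ×ˢ E} = D := by ext s; simp [hAE]
          rw [Set.indicator_of_mem (Set.mem_preimage.2 hAE), hsect]
          exact h0
        · have hsect : {s | (s, A ω) ∈ D ×ˢ E} = (∅ : Set 𝒮) := by ext s; simp [hAE]
          rw [Set.indicator_of_notMem (fun hc => hAE (Set.mem_preimage.1 hc)), hsect]
          simp
      · have hL : ∀ ω, Set.indicator (D ×ˢ E) (1 : 𝒮 × 𝒜 → ℝ≥0∞) (S ω, A ω)
            = (A ⁻¹' E).indicator (fun ω => Set.indicator D (1 : 𝒮 → ℝ≥0∞) (S ω)) ω := by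
          intro ω; by_cases hAE : A ω ∈ E <;> by_cases hSD : S ω ∈ D <;>
            simp [Set.indicator_apply, hAE, hSD]
        have hR : ∀ ω, ρ ω {s | (s, A ω) ∈ D ×ˢ E}
            = (A ⁻¹' E).indicator (fun ω => ρ ω D) ω := by
          intro ω; by_cases hAE : A ω ∈ E
          · have hsect : {s | (s, A ω) ∈ D ×ˢ E} = D := by ext s; simp [hAE]
            simp [Set.indicator_apply, hAE, hsect]
          · have hsect : {s | (s, A ω) ∈ D ×ˢ E} = (∅ : Set 𝒮) := by ext s; simp [hAE]
            simp [Set.indicator_apply, hAE, hsect]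
        simp only [hL, hR]
        rw [lintegral_indicator (hA hE), lintegral_indicator (hA hE)]
        exact hu0int E hE
    · rintro D hD ⟨u, hum, huae, hid⟩
      have haemρ : AEMeasurable (fun ω => ρ ω {s | (s, A ω) ∈ D}) μ :=
        ((hum.mono hm' le_rfl).aemeasurable).congr huae
      have hle1 : ∀ᵐ ω ∂μ, ρ ω {s | (s, A ω) ∈ D} ≤ 1 := by
        filter_upwards [hρ1] with ω h1
        exact le_trans (measure_mono (Set.subset_univ _)) (le_of_eq h1)
      have hfinρ : ∫⁻ ω, ρ ω {s | (s, A ω) ∈ D} ∂μ ≠ ∞ := by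
        refine ne_top_of_le_ne_top (ne_of_lt ?_) (lintegral_mono_ae hle1)
        simpa using measure_lt_top μ Set.univ
      have haecompl : (fun ω => ρ ω {s | (s, A ω) ∈ Dᶜ})
          =ᵐ[μ] fun ω => 1 - ρ ω {s | (s, A ω) ∈ D} := by
        filter_upwards [hρ1] with ω h1
        have hcs : {s | (s, A ω) ∈ Dᶜ} = {s | (s, A ω) ∈ D}ᶜ := rfl
        have hne : ρ ω {s | (s, A ω) ∈ D} ≠ ∞ :=
          ne_top_of_le_ne_top (by simp [h1]) (measure_mono (Set.subset_univ _))
        rw [hcs, measure_compl (hsec D hD (A ω)) hne, h1]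
      refine ⟨fun ω => 1 - u ω, measurable_const.sub hum, ?_, ?_⟩
      · filter_upwards [huae, haecompl] with ω h0 h1
        rw [h1, h0]
      · rw [hrepr _ hD.compl, Set.preimage_compl,
          measure_compl (hpair hD) (measure_ne_top μ _),
          lintegral_congr_ae haecompl, lintegral_sub' haemρ hfinρ hle1,
          lintegral_one, ← hrepr _ hD, hid]
    · intro f hdisj hfmeas hC
      choose u hum huae hid using hC
      have hsecU : ∀ ω, {s | (s, A ω) ∈ ⋃ n, f n} = ⋃ n, {s | (s, A ω) ∈ f n} := by
        intro ω; ext s; simp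
      have hdisj' : ∀ ω, Pairwise (Function.onFun Disjoint fun n => {s | (s, A ω) ∈ f n}) := by
        intro ω i j hij
        exact Set.disjoint_left.2 fun s hsi hsj =>
          Set.disjoint_left.1 (hdisj hij) hsi hsj
      have hmeasUn : ∀ ω, ρ ω {s | (s, A ω) ∈ ⋃ n, f n}
          = ∑' n, ρ ω {s | (s, A ω) ∈ f n} := by
        intro ω
        rw [hsecU ω, measure_iUnion (hdisj' ω) (fun n => hsec _ (hfmeas n) _)]
      refine ⟨fun ω => ∑' n, u n ω, Measurable.ennreal_tsum hum, ?_, ?_⟩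
      · have hall : ∀ᵐ ω ∂μ, ∀ n, u n ω = ρ ω {s | (s, A ω) ∈ f n} := ae_all_iff.2 huae
        filter_upwards [hall] with ω hω
        rw [hmeasUn ω]
        exact tsum_congr hω
      · rw [hrepr _ (MeasurableSet.iUnion hfmeas), Set.preimage_iUnion,
          measure_iUnion (fun i j hij => (hdisj hij).preimage _) (fun n => hpair (hfmeas n))]
        have haen : ∀ n, AEMeasurable (fun ω => ρ ω {s | (s, A ω) ∈ f n}) μ := fun n =>
          (((hum n).mono hm' le_rfl).aemeasurable).congr (huae n)
        calc ∑' n, μ ((fun ω => (S ω, A ω)) ⁻¹' f n)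
            = ∑' n, ∫⁻ ω, ρ ω {s | (s, A ω) ∈ f n} ∂μ := by
              refine tsum_congr fun n => ?_
              rw [← hid n, hrepr _ (hfmeas n)]
          _ = ∫⁻ ω, ∑' n, ρ ω {s | (s, A ω) ∈ f n} ∂μ := (lintegral_tsum haen).symm
          _ = ∫⁻ ω, ρ ω {s | (s, A ω) ∈ ⋃ n, f n} ∂μ := by
              refine lintegral_congr fun ω => ?_
              rw [hmeasUn ω]
  -- Step 2: all measurable ℝ≥0∞-valued functions
  refine @Measurable.ennreal_induction (𝒮 × 𝒜) _ (fun φ =>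
      ∃ u : Ω → ℝ≥0∞, Measurable[MeasurableSpace.comap A m𝒜] u ∧
      u =ᵐ[μ] (fun ω => ∫⁻ s, φ (s, A ω) ∂ρ ω) ∧
      ∫⁻ ω, φ (S ω, A ω) ∂μ = ∫⁻ ω, ∫⁻ s, φ (s, A ω) ∂ρ ω ∂μ) ?_ ?_ ?_ φ hφ
  · intro c D hD
    obtain ⟨u, hum, huae, hid⟩ := hsets D hD
    have hin : ∀ ω, ∫⁻ s, Set.indicator D (fun _ => c) (s, A ω) ∂ρ ω
        = c * ρ ω {s | (s, A ω) ∈ D} := by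
      intro ω
      have hfs : (fun s => Set.indicator D (fun _ => c) (s, A ω))
          = Set.indicator {s | (s, A ω) ∈ D} (fun _ => c) := by
        funext s; by_cases hs : (s, A ω) ∈ D <;> simp [Set.indicator_apply, hs]
      rw [hfs, lintegral_indicator (hsec D hD (A ω)), setLIntegral_const]
    have haemρ : AEMeasurable (fun ω => ρ ω {s | (s, A ω) ∈ D}) μ :=
      ((hum.mono hm' le_rfl).aemeasurable).congr huae
    refine ⟨fun ω => c * u ω, hum.const_mul c, ?_, ?_⟩
    · filter_upwards [huae] with ω h0
      rw [hin ω, h0]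
    · have hLpt : ∀ ω, Set.indicator D (fun _ => c) (S ω, A ω)
          = c * Set.indicator D 1 (S ω, A ω) := by
        intro ω; by_cases hp : (S ω, A ω) ∈ D <;> simp [Set.indicator_apply, hp]
      simp only [hLpt, hin]
      rw [lintegral_const_mul'' c (show Measurable fun ω => Set.indicator D (1 : 𝒮 × 𝒜 → ℝ≥0∞) (S ω, A ω) from (measurable_one.indicator hD).comp hpair).aemeasurable,
        lintegral_const_mul'' c haemρ, hid]
  · rintro φ₁ φ₂ _ h₁ h₂ ⟨u₁, hm₁, hae₁, hi₁⟩ ⟨u₂, hm₂, hae₂, hi₂⟩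
    have hinadd : ∀ ω, ∫⁻ s, (φ₁ + φ₂) (s, A ω) ∂ρ ω
        = (∫⁻ s, φ₁ (s, A ω) ∂ρ ω) + ∫⁻ s, φ₂ (s, A ω) ∂ρ ω := by
      intro ω
      simp only [Pi.add_apply]
      exact lintegral_add_left (show Measurable fun s => φ₁ (s, A ω) from h₁.comp measurable_prodMk_right) _
    have haem₁ : AEMeasurable (fun ω => ∫⁻ s, φ₁ (s, A ω) ∂ρ ω) μ :=
      ((hm₁.mono hm' le_rfl).aemeasurable).congr hae₁
    refine ⟨u₁ + u₂, hm₁.add hm₂, ?_, ?_⟩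
    · filter_upwards [hae₁, hae₂] with ω e₁ e₂
      rw [Pi.add_apply, hinadd ω, e₁, e₂]
    · calc ∫⁻ ω, (φ₁ + φ₂) (S ω, A ω) ∂μ
          = (∫⁻ ω, φ₁ (S ω, A ω) ∂μ) + ∫⁻ ω, φ₂ (S ω, A ω) ∂μ := by
            simp only [Pi.add_apply]
            exact lintegral_add_left (show Measurable fun ω => φ₁ (S ω, A ω) from
              h₁.comp hpair) _
        _ = (∫⁻ ω, ∫⁻ s, φ₁ (s, A ω) ∂ρ ω ∂μ) + ∫⁻ ω, ∫⁻ s, φ₂ (s, A ω) ∂ρ ω ∂μ := by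
            rw [hi₁, hi₂]
        _ = ∫⁻ ω, (∫⁻ s, φ₁ (s, A ω) ∂ρ ω) + ∫⁻ s, φ₂ (s, A ω) ∂ρ ω ∂μ :=
            (lintegral_add_left' haem₁ _).symm
        _ = ∫⁻ ω, ∫⁻ s, (φ₁ + φ₂) (s, A ω) ∂ρ ω ∂μ :=
            lintegral_congr fun ω => (hinadd ω).symm
  · intro f hf hmono hP
    choose u hum huae hid using hP
    have hinsup : ∀ ω, ∫⁻ s, (⨆ n, f n (s, A ω)) ∂ρ ω
        = ⨆ n, ∫⁻ s, f n (s, A ω) ∂ρ ω := by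
      intro ω
      exact lintegral_iSup (fun n => (hf n).comp measurable_prodMk_right)
        (fun i j hij s => hmono hij (s, A ω))
    have haen : ∀ n, AEMeasurable (fun ω => ∫⁻ s, f n (s, A ω) ∂ρ ω) μ := fun n =>
      (((hum n).mono hm' le_rfl).aemeasurable).congr (huae n)
    refine ⟨fun ω => ⨆ n, u n ω, Measurable.iSup hum, ?_, ?_⟩
    · have hall : ∀ᵐ ω ∂μ, ∀ n, u n ω = ∫⁻ s, f n (s, A ω) ∂ρ ω := ae_all_iff.2 huae
      filter_upwards [hall] with ω hω
      rw [hinsup ω]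
      exact iSup_congr hω
    · calc ∫⁻ ω, (⨆ n, f n (S ω, A ω)) ∂μ
          = ⨆ n, ∫⁻ ω, f n (S ω, A ω) ∂μ :=
            lintegral_iSup (fun n => (hf n).comp hpair) (fun i j hij ω => hmono hij (S ω, A ω))
        _ = ⨆ n, ∫⁻ ω, ∫⁻ s, f n (s, A ω) ∂ρ ω ∂μ := iSup_congr hid
        _ = ∫⁻ ω, ⨆ n, ∫⁻ s, f n (s, A ω) ∂ρ ω ∂μ := by
            rw [lintegral_iSup' haen (Filter.Eventually.of_forall fun ω i j hij =>
              lintegral_mono fun s => hmono hij (s, A ω))]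
        _ = ∫⁻ ω, ∫⁻ s, (⨆ n, f n (s, A ω)) ∂ρ ω ∂μ := by
            refine lintegral_congr fun ω => ?_
            rw [hinsup ω]

end UndoReweightAux

open UndoReweightAux

/-- **Undoing a reweighting.** Let `P` be a probability measure, `W = h(S,A) ≥ 0` with
`0 < E[W] < ∞`, and `P* = (W/E[W])·dP`. If under `P*` the conditional law of `S` given
`σ(A)` is `Q_A` weighted by `g(S)` (normalized), then under `P` the conditional law of `S`
given `σ(A)` is `Q_A` weighted by `g(S)/h(S,A)` (normalized), provided the normalizations
are a.s. finite and positive. Conditional laws are expressed via bounded measurable test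
functions `F`. -/

theorem conditional_law_undo_reweighting
    {Ω 𝒮 𝒜 : Type*} [MeasurableSpace Ω] [MeasurableSpace 𝒮] [MeasurableSpace 𝒜]
    (P : Measure Ω) [IsProbabilityMeasure P]
    (S : Ω → 𝒮) (A : Ω → 𝒜) (hS : Measurable S) (hA : Measurable A)
    (Q : 𝒜 → Measure 𝒮) (hQ : ∀ a, IsProbabilityMeasure (Q a))
    (g : 𝒮 → ℝ) (hg : Measurable g) (hg0 : ∀ s, 0 ≤ g s)
    (h : 𝒮 → 𝒜 → ℝ) (hh : Measurable (Function.uncurry h))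
    (hh0 : ∀ s a, 0 < h s a)
    (W : Ω → ℝ) (hW : ∀ ω, W ω = h (S ω) (A ω))
    (hWint : Integrable W P) (hWpos : 0 < ∫ ω, W ω ∂P)
    -- normalizations finite and positive a.s.:
    (hgint : ∀ᵐ ω ∂P, Integrable g (Q (A ω)) ∧ 0 < ∫ s, g s ∂Q (A ω))
    (hghint : ∀ᵐ ω ∂P, Integrable (fun s => g s / h s (A ω)) (Q (A ω)) ∧
      0 < ∫ s, g s / h s (A ω) ∂Q (A ω))
    -- under `P*`, the conditional law of `S` given `σ(A)` is `Q_A` weighted by `g`: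
    (hcondStar : ∀ F : 𝒮 → ℝ, Measurable F → (∃ C : ℝ, ∀ s, |F s| ≤ C) →
      (P.withDensity (fun ω => ENNReal.ofReal (W ω / ∫ ω', W ω' ∂P)))[fun ω => F (S ω)
          | MeasurableSpace.comap A inferInstance]
        =ᵐ[P.withDensity (fun ω => ENNReal.ofReal (W ω / ∫ ω', W ω' ∂P))]
          fun ω => (∫ s, F s * g s ∂Q (A ω)) / ∫ s, g s ∂Q (A ω)) :
    ∀ F : 𝒮 → ℝ, Measurable F → (∃ C : ℝ, ∀ s, |F s| ≤ C) →
      P[fun ω => F (S ω) | MeasurableSpace.comap A inferInstance]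
        =ᵐ[P] fun ω =>
          (∫ s, F s * (g s / h s (A ω)) ∂Q (A ω)) /
            ∫ s, g s / h s (A ω) ∂Q (A ω) := by
  intro F hF hFbd
  classical
  -- basic setup
  have hm' : MeasurableSpace.comap A inferInstance ≤ ‹MeasurableSpace Ω› := hA.comap_le
  obtain ⟨C0, hC0⟩ := hFbd
  set C : ℝ := max C0 0 with hC_def
  have hC : ∀ s, |F s| ≤ C := fun s => (hC0 s).trans (le_max_left _ _)
  have hCnn : 0 ≤ C := le_max_right _ _
  set c : ℝ := ∫ ω', W ω' ∂P with hc_def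
  have hc : 0 < c := hWpos
  have hhp : Measurable fun p : 𝒮 × 𝒜 => h p.1 p.2 := hh
  have hWmeas : Measurable W := by
    have hWeq : W = fun ω => h (S ω) (A ω) := funext hW
    rw [hWeq]; exact hhp.comp (hS.prodMk hA)
  have hWpos' : ∀ ω, 0 < W ω := fun ω => (hW ω) ▸ hh0 _ _
  set d : Ω → ℝ≥0∞ := fun ω => ENNReal.ofReal (W ω / c) with hd_def
  set Pstar : Measure Ω := P.withDensity d with hPs_def
  have hd_meas : Measurable d := (hWmeas.div_const c).ennreal_ofReal
  have hd_pos : ∀ ω, d ω ≠ 0 := fun ω =>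
    (ENNReal.ofReal_pos.2 (div_pos (hWpos' ω) hc)).ne'
  have hd_ne_top : ∀ ω, d ω ≠ ∞ := fun ω => ENNReal.ofReal_ne_top
  haveI hPstarProb : IsProbabilityMeasure Pstar := by
    constructor
    rw [hPs_def, withDensity_apply _ MeasurableSet.univ, Measure.restrict_univ, hd_def]
    rw [← ofReal_integral_eq_lintegral_ofReal (hWint.div_const c)
      (Filter.Eventually.of_forall fun ω => (div_pos (hWpos' ω) hc).le)]
    rw [integral_div, ← hc_def, div_self hc.ne', ENNReal.ofReal_one]
  have hPsP : Pstar ≪ P := withDensity_absolutelyContinuous _ _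
  have hPPs : P ≪ Pstar :=
    withDensity_absolutelyContinuous' hd_meas.aemeasurable
      (Filter.Eventually.of_forall hd_pos)
  have toStar : ∀ {p : Ω → Prop}, (∀ᵐ ω ∂P, p ω) → (∀ᵐ ω ∂Pstar, p ω) :=
    fun hp => hPsP.ae_le hp
  have toP : ∀ {p : Ω → Prop}, (∀ᵐ ω ∂Pstar, p ω) → (∀ᵐ ω ∂P, p ω) :=
    fun hp => hPPs.ae_le hp
  -- the reference fiber measures
  set gE : 𝒮 → ℝ≥0∞ := fun s => ENNReal.ofReal (g s) with hgE_def
  have hgEmeas : Measurable gE := hg.ennreal_ofReal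
  set denom : Ω → ℝ≥0∞ := fun ω => ∫⁻ s, gE s ∂Q (A ω) with hden_def
  set ρ : Ω → Measure 𝒮 := fun ω => (denom ω)⁻¹ • (Q (A ω)).withDensity gE with hρ_def
  have hden_ae : ∀ᵐ ω ∂P, denom ω = ENNReal.ofReal (∫ s, g s ∂Q (A ω)) ∧
      denom ω ≠ 0 ∧ denom ω ≠ ∞ := by
    filter_upwards [hgint] with ω hω
    have h1 : ENNReal.ofReal (∫ s, g s ∂Q (A ω)) = ∫⁻ s, gE s ∂Q (A ω) :=
      ofReal_integral_eq_lintegral_ofReal hω.1 (Filter.Eventually.of_forall hg0)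
    refine ⟨h1.symm, ?_, ?_⟩
    · rw [hden_def]; dsimp only
      rw [← h1]; exact (ENNReal.ofReal_pos.2 hω.2).ne'
    · rw [hden_def]; dsimp only
      rw [← h1]; exact ENNReal.ofReal_ne_top
  have hρuniv : ∀ᵐ ω ∂P, ρ ω Set.univ = 1 := by
    filter_upwards [hden_ae] with ω hω
    rw [hρ_def]; dsimp only
    rw [Measure.smul_apply, smul_eq_mul, withDensity_apply _ MeasurableSet.univ,
      Measure.restrict_univ]
    exact ENNReal.inv_mul_cancel hω.2.1 hω.2.2
  -- rectangle hypothesis for `key`, from the conditional law under `Pstar`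
  have hrect : ∀ D : Set 𝒮, MeasurableSet D → ∃ u : Ω → ℝ≥0∞,
      Measurable[MeasurableSpace.comap A inferInstance] u ∧ u =ᵐ[Pstar] (fun ω => ρ ω D) ∧
      ∀ E : Set 𝒜, MeasurableSet E →
        ∫⁻ ω in A ⁻¹' E, Set.indicator D 1 (S ω) ∂Pstar
          = ∫⁻ ω in A ⁻¹' E, ρ ω D ∂Pstar := by
    intro D hD
    set FD : 𝒮 → ℝ := D.indicator (fun _ => 1) with hFD_def
    have hFDmeas : Measurable FD := measurable_const.indicator hD
    have hFD01 : ∀ s, 0 ≤ FD s ∧ FD s ≤ 1 := by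
      intro s; by_cases hs : s ∈ D <;> simp [hFD_def, Set.indicator_apply, hs]
    have hFDbd : ∃ C1 : ℝ, ∀ s, |FD s| ≤ C1 :=
      ⟨1, fun s => abs_le.2 ⟨by linarith [(hFD01 s).1], (hFD01 s).2⟩⟩
    have hce := hcondStar FD hFDmeas hFDbd
    have hrDnn : ∀ ω, 0 ≤ (∫ s, FD s * g s ∂Q (A ω)) / ∫ s, g s ∂Q (A ω) := fun ω =>
      div_nonneg (integral_nonneg fun s => mul_nonneg (hFD01 s).1 (hg0 s))
        (integral_nonneg hg0)
    have hρD : ∀ᵐ ω ∂Pstar,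
        ENNReal.ofReal ((∫ s, FD s * g s ∂Q (A ω)) / ∫ s, g s ∂Q (A ω)) = ρ ω D := by
      refine toStar ?_
      filter_upwards [hgint, hden_ae] with ω hg1 hd1
      have hFg : (fun s => FD s * g s) = D.indicator g := by
        funext s; by_cases hs : s ∈ D <;> simp [hFD_def, Set.indicator_apply, hs]
      have h2 : ENNReal.ofReal (∫ s, FD s * g s ∂Q (A ω)) = ∫⁻ s in D, gE s ∂Q (A ω) := by
        rw [hFg, integral_indicator hD]
        exact ofReal_integral_eq_lintegral_ofReal hg1.1.integrableOn
          (Filter.Eventually.of_forall fun s => hg0 s)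
      rw [ENNReal.ofReal_div_of_pos hg1.2, h2, ← hd1.1]
      rw [hρ_def]; dsimp only
      rw [Measure.smul_apply, smul_eq_mul, withDensity_apply _ hD,
        div_eq_mul_inv, mul_comm]
    set u : Ω → ℝ≥0∞ :=
      fun ω => ENNReal.ofReal ((Pstar[fun ω' => FD (S ω')
        | MeasurableSpace.comap A inferInstance]) ω) with hu_def
    have hum : Measurable[MeasurableSpace.comap A inferInstance] u :=
      stronglyMeasurable_condExp.measurable.ennreal_ofReal
    have huae : u =ᵐ[Pstar] fun ω => ρ ω D := by
      filter_upwards [hce, hρD] with ω h1 h2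
      rw [hu_def]; dsimp only
      rw [h1]; exact h2
    refine ⟨u, hum, huae, ?_⟩
    intro E hE
    have hBm' : MeasurableSet[MeasurableSpace.comap A inferInstance] (A ⁻¹' E) :=
      ⟨E, hE, rfl⟩
    have hB : MeasurableSet (A ⁻¹' E) := hm' _ hBm'
    have hFSint : Integrable (fun ω => FD (S ω)) Pstar := by
      refine Integrable.mono' (integrable_const 1)
        ((hFDmeas.comp hS).aestronglyMeasurable)
        (Filter.Eventually.of_forall fun ω => ?_)
      rw [Real.norm_eq_abs]
      exact abs_le.2 ⟨by linarith [(hFD01 (S ω)).1], (hFD01 (S ω)).2⟩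
    have hset1 : ∫ ω in A ⁻¹' E, FD (S ω) ∂Pstar
        = ∫ ω in A ⁻¹' E, (Pstar[fun ω' => FD (S ω')
            | MeasurableSpace.comap A inferInstance]) ω ∂Pstar :=
      (setIntegral_condExp hm' hFSint hBm').symm
    have hcond_nn : 0 ≤ᵐ[Pstar]
        (Pstar[fun ω' => FD (S ω') | MeasurableSpace.comap A inferInstance]) := by
      filter_upwards [hce] with ω h1
      rw [h1]; exact hrDnn ω
    have hLHS : ∫⁻ ω in A ⁻¹' E, Set.indicator D 1 (S ω) ∂Pstar
        = ENNReal.ofReal (∫ ω in A ⁻¹' E, FD (S ω) ∂Pstar) := by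
      rw [ofReal_integral_eq_lintegral_ofReal hFSint.integrableOn
        (Filter.Eventually.of_forall fun ω => (hFD01 (S ω)).1)]
      refine lintegral_congr fun ω => ?_
      by_cases hs : S ω ∈ D <;> simp [hFD_def, Set.indicator_apply, hs]
    have hRHS : ∫⁻ ω in A ⁻¹' E, ρ ω D ∂Pstar
        = ENNReal.ofReal (∫ ω in A ⁻¹' E, (Pstar[fun ω' => FD (S ω')
            | MeasurableSpace.comap A inferInstance]) ω ∂Pstar) := by
      rw [ofReal_integral_eq_lintegral_ofReal integrable_condExp.integrableOn
        (ae_restrict_of_ae hcond_nn)]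
      refine lintegral_congr_ae (ae_restrict_of_ae ?_)
      filter_upwards [huae] with ω h1
      rw [← h1, hu_def]
    rw [hLHS, hRHS, hset1]
  -- set-restricted version of `key`
  have hKEYset : ∀ {φ : 𝒮 × 𝒜 → ℝ≥0∞}, Measurable φ → ∀ B : Set Ω,
      MeasurableSet[MeasurableSpace.comap A inferInstance] B →
      ∫⁻ ω in B, φ (S ω, A ω) ∂Pstar = ∫⁻ ω in B, ∫⁻ s, φ (s, A ω) ∂ρ ω ∂Pstar := by
    intro φ hφ B hBm'
    obtain ⟨E, hE, rfl⟩ := hBm'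
    obtain ⟨u, -, -, hid⟩ := key Pstar hS hA ρ (toStar hρuniv) hrect
      (φ := fun p => φ p * E.indicator 1 p.2)
      (hφ.mul ((measurable_one.indicator hE).comp measurable_snd))
    have hL : ∫⁻ ω, φ (S ω, A ω) * E.indicator 1 (A ω) ∂Pstar
        = ∫⁻ ω in A ⁻¹' E, φ (S ω, A ω) ∂Pstar := by
      rw [← lintegral_indicator (hA hE)]
      refine lintegral_congr fun ω => ?_
      by_cases hω : A ω ∈ E <;> simp [Set.indicator_apply, hω]
    have hR : ∀ ω, ∫⁻ s, φ (s, A ω) * E.indicator 1 (A ω) ∂ρ ω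
        = (A ⁻¹' E).indicator (fun ω => ∫⁻ s, φ (s, A ω) ∂ρ ω) ω := by
      intro ω; by_cases hω : A ω ∈ E <;> simp [Set.indicator_apply, hω]
    calc ∫⁻ ω in A ⁻¹' E, φ (S ω, A ω) ∂Pstar
        = ∫⁻ ω, φ (S ω, A ω) * E.indicator 1 (A ω) ∂Pstar := hL.symm
      _ = ∫⁻ ω, ∫⁻ s, φ (s, A ω) * E.indicator 1 (A ω) ∂ρ ω ∂Pstar := hid
      _ = ∫⁻ ω, (A ⁻¹' E).indicator (fun ω => ∫⁻ s, φ (s, A ω) ∂ρ ω) ω ∂Pstar :=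
          lintegral_congr hR
      _ = ∫⁻ ω in A ⁻¹' E, ∫⁻ s, φ (s, A ω) ∂ρ ω ∂Pstar := lintegral_indicator (hA hE) _
  -- integrability helpers
  have hhma : ∀ a : 𝒜, Measurable fun s => h s a := fun a => hhp.comp measurable_prodMk_right
  have hghnn : ∀ (a : 𝒜) (s : 𝒮), 0 ≤ g s / h s a := fun a s =>
    div_nonneg (hg0 s) (hh0 s a).le
  have hint_psi : ∀ ψ : 𝒮 → ℝ, Measurable ψ → (∀ s, 0 ≤ ψ s) → (∀ s, ψ s ≤ C) →
      ∀ a : 𝒜, Integrable (fun s => g s / h s a) (Q a) →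
      Integrable (fun s => ψ s * (g s / h s a)) (Q a) := by
    intro ψ hψ hψ0 hψC a hint
    refine Integrable.mono' (hint.const_mul C)
      ((hψ.mul (hg.div (hhma a))).aestronglyMeasurable)
      (Filter.Eventually.of_forall fun s => ?_)
    rw [Real.norm_eq_abs, abs_of_nonneg (mul_nonneg (hψ0 s) (hghnn a s))]
    exact mul_le_mul_of_nonneg_right (hψC s) (hghnn a s)
  -- main per-test-function identity
  have hmain : ∀ ψ : 𝒮 → ℝ, Measurable ψ → (∀ s, 0 ≤ ψ s) → (∀ s, ψ s ≤ C) →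
      ∃ v : Ω → ℝ≥0∞, Measurable[MeasurableSpace.comap A inferInstance] v ∧
        (fun ω => ENNReal.ofReal ((∫ s, ψ s * (g s / h s (A ω)) ∂Q (A ω)) /
            ∫ s, g s / h s (A ω) ∂Q (A ω))) =ᵐ[P] v ∧
        ∀ B : Set Ω, MeasurableSet[MeasurableSpace.comap A inferInstance] B →
          ∫⁻ ω in B, ENNReal.ofReal ((∫ s, ψ s * (g s / h s (A ω)) ∂Q (A ω)) /
              ∫ s, g s / h s (A ω) ∂Q (A ω)) ∂P
            = ∫⁻ ω in B, ENNReal.ofReal (ψ (S ω)) ∂P := by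
    intro ψ hψ hψ0 hψC
    set φψ : 𝒮 × 𝒜 → ℝ≥0∞ := fun p => ENNReal.ofReal (ψ p.1 / h p.1 p.2) with hφψ_def
    have hφψm : Measurable φψ := ((hψ.comp measurable_fst).div hhp).ennreal_ofReal
    set φinv : 𝒮 × 𝒜 → ℝ≥0∞ := fun p => (ENNReal.ofReal (h p.1 p.2))⁻¹ with hφinv_def
    have hφinvm : Measurable φinv := hhp.ennreal_ofReal.inv
    obtain ⟨Φψ, hΦψm, hΦψae, -⟩ := key Pstar hS hA ρ (toStar hρuniv) hrect hφψm
    obtain ⟨Φ1, hΦ1m, hΦ1ae, -⟩ := key Pstar hS hA ρ (toStar hρuniv) hrect hφinvm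
    have hinner_ψ : ∀ᵐ ω ∂P, (∫⁻ s, φψ (s, A ω) ∂ρ ω)
        = ENNReal.ofReal (∫ s, ψ s * (g s / h s (A ω)) ∂Q (A ω)) / denom ω := by
      filter_upwards [hghint] with ω h1
      have hcomp : Measurable fun s => φψ (s, A ω) := hφψm.comp measurable_prodMk_right
      rw [hρ_def]; dsimp only
      rw [lintegral_smul_measure, lintegral_withDensity_eq_lintegral_mul _ hgEmeas hcomp]
      have hpt : ∀ s, (gE * fun s => φψ (s, A ω)) s
          = ENNReal.ofReal (ψ s * (g s / h s (A ω))) := by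
        intro s
        rw [Pi.mul_apply, hφψ_def, hgE_def]; dsimp only
        rw [← ENNReal.ofReal_mul (hg0 s)]
        congr 1
        have hne := (hh0 s (A ω)).ne'
        field_simp
      simp only [hpt]
      rw [← ofReal_integral_eq_lintegral_ofReal (hint_psi ψ hψ hψ0 hψC (A ω) h1.1)
        (Filter.Eventually.of_forall fun s => mul_nonneg (hψ0 s) (hghnn (A ω) s))]
      rw [ENNReal.div_eq_inv_mul, smul_eq_mul]
    have hinner_inv : ∀ᵐ ω ∂P, (∫⁻ s, φinv (s, A ω) ∂ρ ω)
        = ENNReal.ofReal (∫ s, g s / h s (A ω) ∂Q (A ω)) / denom ω := by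
      filter_upwards [hghint] with ω h1
      have hcomp : Measurable fun s => φinv (s, A ω) := hφinvm.comp measurable_prodMk_right
      rw [hρ_def]; dsimp only
      rw [lintegral_smul_measure, lintegral_withDensity_eq_lintegral_mul _ hgEmeas hcomp]
      have hpt : ∀ s, (gE * fun s => φinv (s, A ω)) s
          = ENNReal.ofReal (g s / h s (A ω)) := by
        intro s
        rw [Pi.mul_apply, hφinv_def, hgE_def]; dsimp only
        rw [ENNReal.ofReal_div_of_pos (hh0 s (A ω)), div_eq_mul_inv]
      simp only [hpt]
      rw [← ofReal_integral_eq_lintegral_ofReal h1.1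
        (Filter.Eventually.of_forall fun s => hghnn (A ω) s)]
      rw [ENNReal.div_eq_inv_mul, smul_eq_mul]
    have hT1pos : ∀ᵐ ω ∂P, 0 < ∫ s, g s / h s (A ω) ∂Q (A ω) :=
      hghint.mono fun ω h1 => h1.2
    have hΦψP : ∀ᵐ ω ∂P, Φψ ω
        = ENNReal.ofReal (∫ s, ψ s * (g s / h s (A ω)) ∂Q (A ω)) / denom ω := by
      filter_upwards [toP hΦψae, hinner_ψ] with ω e1 e2
      rw [e1, e2]
    have hΦ1P : ∀ᵐ ω ∂P, Φ1 ω
        = ENNReal.ofReal (∫ s, g s / h s (A ω) ∂Q (A ω)) / denom ω := by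
      filter_upwards [toP hΦ1ae, hinner_inv] with ω e1 e2
      rw [e1, e2]
    have hΦ1pos : ∀ᵐ ω ∂P, Φ1 ω ≠ 0 ∧ Φ1 ω ≠ ∞ := by
      filter_upwards [hΦ1P, hT1pos, hden_ae] with ω e1 hpos hd1
      constructor
      · rw [e1]
        exact (ENNReal.div_pos (ENNReal.ofReal_pos.2 hpos).ne' hd1.2.2).ne'
      · rw [e1]
        exact (ENNReal.div_lt_top ENNReal.ofReal_ne_top hd1.2.1).ne
    have hratio : (fun ω => ENNReal.ofReal ((∫ s, ψ s * (g s / h s (A ω)) ∂Q (A ω)) /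
        ∫ s, g s / h s (A ω) ∂Q (A ω))) =ᵐ[P] fun ω => Φψ ω / Φ1 ω := by
      filter_upwards [hΦψP, hΦ1P, hT1pos, hden_ae] with ω e1 e2 hpos hd1
      rw [e1, e2, ennreal_div_div_div hd1.2.1 hd1.2.2, ENNReal.ofReal_div_of_pos hpos]
    refine ⟨fun ω => Φψ ω / Φ1 ω, hΦψm.div hΦ1m, hratio, ?_⟩
    intro B hBm'
    have hB : MeasurableSet B := hm' _ hBm'
    have hum : Measurable[MeasurableSpace.comap A inferInstance] fun ω => Φψ ω / Φ1 ω :=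
      hΦψm.div hΦ1m
    have humΩ : Measurable fun ω => Φψ ω / Φ1 ω := hum.mono hm' le_rfl
    have hXW : ∀ ω, φinv (S ω, A ω) = (ENNReal.ofReal (W ω))⁻¹ := by
      intro ω; rw [hφinv_def]; dsimp only; rw [hW ω]
    have hdinv : ∀ ω, (d ω)⁻¹ = ENNReal.ofReal c * (ENNReal.ofReal (W ω))⁻¹ := by
      intro ω
      rw [hd_def]; dsimp only
      rw [ENNReal.ofReal_div_of_pos hc, div_eq_mul_inv,
        ENNReal.mul_inv (Or.inl (ENNReal.ofReal_pos.2 (hWpos' ω)).ne')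
          (Or.inl ENNReal.ofReal_ne_top),
        inv_inv, mul_comm]
    have hY : AEMeasurable (fun ω => ∫⁻ s, φinv (s, A ω) ∂ρ ω) Pstar :=
      ((hΦ1m.mono hm' le_rfl).aemeasurable).congr hΦ1ae
    have hXmeas : Measurable fun ω => φinv (S ω, A ω) := hφinvm.comp (hS.prodMk hA)
    have hweight := lintegral_mul_eq_of_forall_set hm' hXmeas.aemeasurable hY
      (hKEYset hφinvm) (v := B.indicator fun ω => Φψ ω / Φ1 ω) (hum.indicator hBm')
    have hindid : ∀ Z : Ω → ℝ≥0∞,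
        ∫⁻ ω, Z ω * (B.indicator (fun ω => Φψ ω / Φ1 ω)) ω ∂Pstar
          = ∫⁻ ω in B, Z ω * (Φψ ω / Φ1 ω) ∂Pstar := by
      intro Z
      rw [← lintegral_indicator hB]
      refine lintegral_congr fun ω => ?_
      by_cases hω : ω ∈ B <;> simp [Set.indicator_apply, hω]
    calc ∫⁻ ω in B, ENNReal.ofReal ((∫ s, ψ s * (g s / h s (A ω)) ∂Q (A ω)) /
            ∫ s, g s / h s (A ω) ∂Q (A ω)) ∂P
        = ∫⁻ ω in B, Φψ ω / Φ1 ω ∂P := lintegral_congr_ae (ae_restrict_of_ae hratio)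
      _ = ∫⁻ ω in B, (Φψ ω / Φ1 ω) * (d ω)⁻¹ ∂Pstar := by
          rw [hPs_def, restrict_withDensity hB,
            lintegral_withDensity_eq_lintegral_mul _ hd_meas
              (show Measurable fun ω => Φψ ω / Φ1 ω * (d ω)⁻¹ from humΩ.mul hd_meas.inv)]
          refine lintegral_congr fun ω => ?_
          simp only [Pi.mul_apply]
          rw [mul_comm (d ω), mul_assoc, ENNReal.inv_mul_cancel (hd_pos ω) (hd_ne_top ω),
            mul_one]
      _ = ∫⁻ ω in B, ENNReal.ofReal c * (φinv (S ω, A ω) * (Φψ ω / Φ1 ω)) ∂Pstar := by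
          refine lintegral_congr fun ω => ?_
          rw [hdinv ω, hXW ω]
          ring
      _ = ENNReal.ofReal c * ∫⁻ ω in B, φinv (S ω, A ω) * (Φψ ω / Φ1 ω) ∂Pstar :=
          lintegral_const_mul' _ _ ENNReal.ofReal_ne_top
      _ = ENNReal.ofReal c * ∫⁻ ω in B, (∫⁻ s, φinv (s, A ω) ∂ρ ω) * (Φψ ω / Φ1 ω) ∂Pstar := by
          congr 1
          rw [← hindid (fun ω => φinv (S ω, A ω)),
            ← hindid (fun ω => ∫⁻ s, φinv (s, A ω) ∂ρ ω)]
          exact hweight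
      _ = ENNReal.ofReal c * ∫⁻ ω in B, Φψ ω ∂Pstar := by
          congr 1
          refine lintegral_congr_ae (ae_restrict_of_ae ?_)
          filter_upwards [hΦ1ae, toStar hΦ1pos] with ω e1 e2
          rw [← e1]
          exact ENNReal.mul_div_cancel e2.1 e2.2
      _ = ENNReal.ofReal c * ∫⁻ ω in B, (∫⁻ s, φψ (s, A ω) ∂ρ ω) ∂Pstar := by
          congr 1
          exact lintegral_congr_ae (ae_restrict_of_ae hΦψae)
      _ = ENNReal.ofReal c * ∫⁻ ω in B, φψ (S ω, A ω) ∂Pstar := by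
          congr 1
          exact (hKEYset hφψm B hBm').symm
      _ = ENNReal.ofReal c * ∫⁻ ω in B, d ω * φψ (S ω, A ω) ∂P := by
          congr 1
          rw [hPs_def, restrict_withDensity hB,
            lintegral_withDensity_eq_lintegral_mul _ hd_meas
              (show Measurable fun ω => φψ (S ω, A ω) from hφψm.comp (hS.prodMk hA))]
          exact lintegral_congr fun ω => by simp only [Pi.mul_apply]
      _ = ENNReal.ofReal c * ∫⁻ ω in B, (ENNReal.ofReal c)⁻¹ * ENNReal.ofReal (ψ (S ω)) ∂P := by
          congr 1
          refine lintegral_congr fun ω => ?_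
          rw [hd_def, hφψ_def]; dsimp only
          rw [← ENNReal.ofReal_mul (div_nonneg (hWpos' ω).le hc.le)]
          have hWne := (hWpos' ω).ne'
          have hcne := hc.ne'
          have hcomb : W ω / c * (ψ (S ω) / h (S ω) (A ω)) = ψ (S ω) / c := by
            rw [← hW ω]
            field_simp
          rw [hcomb, ENNReal.ofReal_div_of_pos hc, ENNReal.div_eq_inv_mul]
      _ = ∫⁻ ω in B, ENNReal.ofReal (ψ (S ω)) ∂P := by
          rw [lintegral_const_mul' _ _
              (ENNReal.inv_ne_top.2 (ENNReal.ofReal_pos.2 hc).ne'), ← mul_assoc,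
            ENNReal.mul_inv_cancel (ENNReal.ofReal_pos.2 hc).ne' ENNReal.ofReal_ne_top,
            one_mul]
  -- endgame
  set ψp : 𝒮 → ℝ := fun s => max (F s) 0 with hψp_def
  set ψm : 𝒮 → ℝ := fun s => max (-F s) 0 with hψm_def
  have hψpm : Measurable ψp := hF.max measurable_const
  have hψmm : Measurable ψm := hF.neg.max measurable_const
  have hψp0 : ∀ s, 0 ≤ ψp s := fun s => le_max_right _ _
  have hψm0 : ∀ s, 0 ≤ ψm s := fun s => le_max_right _ _
  have hψpC : ∀ s, ψp s ≤ C := fun s => max_le ((le_abs_self _).trans (hC s)) hCnn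
  have hψmC : ∀ s, ψm s ≤ C := fun s => max_le ((neg_le_abs _).trans (hC s)) hCnn
  have hFdec : ∀ s, F s = ψp s - ψm s := by
    intro s
    rw [hψp_def, hψm_def]; dsimp only
    rcases le_total 0 (F s) with h1 | h1
    · rw [max_eq_left h1, max_eq_right (neg_nonpos.2 h1)]; ring
    · rw [max_eq_right h1, max_eq_left (neg_nonneg.2 h1)]; ring
  obtain ⟨vp, hvpm, hvpae, hvpset⟩ := hmain ψp hψpm hψp0 hψpC
  obtain ⟨vm, hvmm, hvmae, hvmset⟩ := hmain ψm hψmm hψm0 hψmC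
  have hratio_nn : ∀ (ψ : 𝒮 → ℝ), (∀ s, 0 ≤ ψ s) → ∀ ω : Ω,
      0 ≤ (∫ s, ψ s * (g s / h s (A ω)) ∂Q (A ω)) / ∫ s, g s / h s (A ω) ∂Q (A ω) :=
    fun ψ hψ0 ω => div_nonneg
      (integral_nonneg fun s => mul_nonneg (hψ0 s) (hghnn (A ω) s))
      (integral_nonneg fun s => hghnn (A ω) s)
  have hratio_le : ∀ ψ : 𝒮 → ℝ, Measurable ψ → (∀ s, 0 ≤ ψ s) → (∀ s, ψ s ≤ C) →
      ∀ᵐ ω ∂P, (∫ s, ψ s * (g s / h s (A ω)) ∂Q (A ω)) /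
        (∫ s, g s / h s (A ω) ∂Q (A ω)) ≤ C := by
    intro ψ hψ hψ0 hψC
    filter_upwards [hghint] with ω h1
    rw [div_le_iff₀ h1.2]
    calc ∫ s, ψ s * (g s / h s (A ω)) ∂Q (A ω)
        ≤ ∫ s, C * (g s / h s (A ω)) ∂Q (A ω) :=
          integral_mono (hint_psi ψ hψ hψ0 hψC (A ω) h1.1) (h1.1.const_mul C)
            (fun s => mul_le_mul_of_nonneg_right (hψC s) (hghnn (A ω) s))
      _ = C * ∫ s, g s / h s (A ω) ∂Q (A ω) := integral_const_mul _ _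
  have hvp_toReal : ∀ᵐ ω ∂P, (∫ s, ψp s * (g s / h s (A ω)) ∂Q (A ω)) /
      (∫ s, g s / h s (A ω) ∂Q (A ω)) = (vp ω).toReal := by
    filter_upwards [hvpae] with ω e1
    rw [← e1, ENNReal.toReal_ofReal (hratio_nn ψp hψp0 ω)]
  have hvm_toReal : ∀ᵐ ω ∂P, (∫ s, ψm s * (g s / h s (A ω)) ∂Q (A ω)) /
      (∫ s, g s / h s (A ω) ∂Q (A ω)) = (vm ω).toReal := by
    filter_upwards [hvmae] with ω e1
    rw [← e1, ENNReal.toReal_ofReal (hratio_nn ψm hψm0 ω)]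
  have hTdec : ∀ᵐ ω ∂P, (∫ s, F s * (g s / h s (A ω)) ∂Q (A ω)) /
      (∫ s, g s / h s (A ω) ∂Q (A ω))
      = (∫ s, ψp s * (g s / h s (A ω)) ∂Q (A ω)) / (∫ s, g s / h s (A ω) ∂Q (A ω))
        - (∫ s, ψm s * (g s / h s (A ω)) ∂Q (A ω)) /
          (∫ s, g s / h s (A ω) ∂Q (A ω)) := by
    filter_upwards [hghint] with ω h1
    have hFi : (fun s => F s * (g s / h s (A ω)))
        = fun s => ψp s * (g s / h s (A ω)) - ψm s * (g s / h s (A ω)) := by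
      funext s; rw [hFdec s]; ring
    rw [hFi, integral_sub (hint_psi ψp hψpm hψp0 hψpC (A ω) h1.1)
      (hint_psi ψm hψmm hψm0 hψmC (A ω) h1.1), sub_div]
  have hRae : (fun ω => (∫ s, F s * (g s / h s (A ω)) ∂Q (A ω)) /
      ∫ s, g s / h s (A ω) ∂Q (A ω)) =ᵐ[P] fun ω => (vp ω).toReal - (vm ω).toReal := by
    filter_upwards [hTdec, hvp_toReal, hvm_toReal] with ω e0 e1 e2
    rw [e0, e1, e2]
  have hvmeas : Measurable[MeasurableSpace.comap A inferInstance]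
      fun ω => (vp ω).toReal - (vm ω).toReal :=
    (ENNReal.measurable_toReal.comp hvpm).sub (ENNReal.measurable_toReal.comp hvmm)
  have hRsm' : AEStronglyMeasurable[MeasurableSpace.comap A inferInstance]
      (fun ω => (∫ s, F s * (g s / h s (A ω)) ∂Q (A ω)) /
        ∫ s, g s / h s (A ω) ∂Q (A ω)) P :=
    ⟨fun ω => (vp ω).toReal - (vm ω).toReal, hvmeas.stronglyMeasurable, hRae⟩
  have hRasm : AEStronglyMeasurable (fun ω => (∫ s, F s * (g s / h s (A ω)) ∂Q (A ω)) /
      ∫ s, g s / h s (A ω) ∂Q (A ω)) P :=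
    (((hvmeas.mono hm' le_rfl).stronglyMeasurable).aestronglyMeasurable).congr hRae.symm
  have hRbd : ∀ᵐ ω ∂P, ‖(∫ s, F s * (g s / h s (A ω)) ∂Q (A ω)) /
      ∫ s, g s / h s (A ω) ∂Q (A ω)‖ ≤ C := by
    filter_upwards [hTdec, hratio_le ψp hψpm hψp0 hψpC, hratio_le ψm hψmm hψm0 hψmC] with
      ω e0 e1 e2
    have h3 := hratio_nn ψp hψp0 ω
    have h4 := hratio_nn ψm hψm0 ω
    rw [Real.norm_eq_abs, e0]
    exact abs_le.2 ⟨by linarith, by linarith⟩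
  have hRint : Integrable (fun ω => (∫ s, F s * (g s / h s (A ω)) ∂Q (A ω)) /
      ∫ s, g s / h s (A ω) ∂Q (A ω)) P :=
    Integrable.mono' (integrable_const C) hRasm hRbd
  have hFSint : Integrable (fun ω => F (S ω)) P :=
    Integrable.mono' (integrable_const C) ((hF.comp hS).aestronglyMeasurable)
      (Filter.Eventually.of_forall fun ω => by
        rw [Real.norm_eq_abs]; exact hC (S ω))
  -- Bochner set-integral identity for nonnegative test functions
  have hψeq : ∀ (ψ : 𝒮 → ℝ) (v : Ω → ℝ≥0∞), Measurable ψ → (∀ s, 0 ≤ ψ s) →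
      (∀ s, ψ s ≤ C) →
      Measurable[MeasurableSpace.comap A inferInstance] v →
      ((fun ω => ENNReal.ofReal ((∫ s, ψ s * (g s / h s (A ω)) ∂Q (A ω)) /
          ∫ s, g s / h s (A ω) ∂Q (A ω))) =ᵐ[P] v) →
      (∀ B : Set Ω, MeasurableSet[MeasurableSpace.comap A inferInstance] B →
        ∫⁻ ω in B, ENNReal.ofReal ((∫ s, ψ s * (g s / h s (A ω)) ∂Q (A ω)) /
            ∫ s, g s / h s (A ω) ∂Q (A ω)) ∂P = ∫⁻ ω in B, ENNReal.ofReal (ψ (S ω)) ∂P) →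
      ∀ B : Set Ω, MeasurableSet[MeasurableSpace.comap A inferInstance] B →
        ∫ ω in B, (∫ s, ψ s * (g s / h s (A ω)) ∂Q (A ω)) /
            (∫ s, g s / h s (A ω) ∂Q (A ω)) ∂P = ∫ ω in B, ψ (S ω) ∂P := by
    intro ψ v hψ hψ0 hψC hvm hvae hvset B hBm'
    have hB : MeasurableSet B := hm' _ hBm'
    have htoReal : (fun ω => (∫ s, ψ s * (g s / h s (A ω)) ∂Q (A ω)) /
        ∫ s, g s / h s (A ω) ∂Q (A ω)) =ᵐ[P] fun ω => (v ω).toReal := by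
      filter_upwards [hvae] with ω e1
      rw [← e1, ENNReal.toReal_ofReal (hratio_nn ψ hψ0 ω)]
    have hasm : AEStronglyMeasurable (fun ω => (∫ s, ψ s * (g s / h s (A ω)) ∂Q (A ω)) /
        ∫ s, g s / h s (A ω) ∂Q (A ω)) P :=
      ((ENNReal.measurable_toReal.comp
        (hvm.mono hm' le_rfl)).stronglyMeasurable.aestronglyMeasurable).congr htoReal.symm
    rw [integral_eq_lintegral_of_nonneg_ae
        (ae_restrict_of_ae (Filter.Eventually.of_forall fun ω => hratio_nn ψ hψ0 ω))
        hasm.restrict,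
      integral_eq_lintegral_of_nonneg_ae
        (ae_restrict_of_ae (Filter.Eventually.of_forall fun ω => hψ0 (S ω)))
        ((hψ.comp hS).aestronglyMeasurable.restrict),
      hvset B hBm']
  have heq : ∀ B : Set Ω, MeasurableSet[MeasurableSpace.comap A inferInstance] B →
      P B < ∞ →
      ∫ ω in B, (∫ s, F s * (g s / h s (A ω)) ∂Q (A ω)) /
          (∫ s, g s / h s (A ω) ∂Q (A ω)) ∂P = ∫ ω in B, F (S ω) ∂P := by
    intro B hBm' _
    have hB : MeasurableSet B := hm' _ hBm'
    have hip : Integrable (fun ω => (∫ s, ψp s * (g s / h s (A ω)) ∂Q (A ω)) /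
        ∫ s, g s / h s (A ω) ∂Q (A ω)) (P.restrict B) := by
      refine (Integrable.mono' (integrable_const C) ?_ ?_).restrict
      · refine ((ENNReal.measurable_toReal.comp
          (hvpm.mono hm' le_rfl)).stronglyMeasurable.aestronglyMeasurable).congr ?_
        filter_upwards [hvp_toReal] with ω e1
        exact e1.symm
      · filter_upwards [hratio_le ψp hψpm hψp0 hψpC] with ω e1
        rw [Real.norm_eq_abs, abs_of_nonneg (hratio_nn ψp hψp0 ω)]
        exact e1
    have him : Integrable (fun ω => (∫ s, ψm s * (g s / h s (A ω)) ∂Q (A ω)) /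
        ∫ s, g s / h s (A ω) ∂Q (A ω)) (P.restrict B) := by
      refine (Integrable.mono' (integrable_const C) ?_ ?_).restrict
      · refine ((ENNReal.measurable_toReal.comp
          (hvmm.mono hm' le_rfl)).stronglyMeasurable.aestronglyMeasurable).congr ?_
        filter_upwards [hvm_toReal] with ω e1
        exact e1.symm
      · filter_upwards [hratio_le ψm hψmm hψm0 hψmC] with ω e1
        rw [Real.norm_eq_abs, abs_of_nonneg (hratio_nn ψm hψm0 ω)]
        exact e1
    have hintp : Integrable (fun ω => ψp (S ω)) (P.restrict B) := by
      refine (Integrable.mono' (integrable_const C) ((hψpm.comp hS).aestronglyMeasurable)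
        (Filter.Eventually.of_forall fun ω => ?_)).restrict
      show ‖ψp (S ω)‖ ≤ C
      rw [Real.norm_eq_abs, abs_of_nonneg (hψp0 (S ω))]
      exact hψpC (S ω)
    have hintm : Integrable (fun ω => ψm (S ω)) (P.restrict B) := by
      refine (Integrable.mono' (integrable_const C) ((hψmm.comp hS).aestronglyMeasurable)
        (Filter.Eventually.of_forall fun ω => ?_)).restrict
      show ‖ψm (S ω)‖ ≤ C
      rw [Real.norm_eq_abs, abs_of_nonneg (hψm0 (S ω))]
      exact hψmC (S ω)
    calc ∫ ω in B, (∫ s, F s * (g s / h s (A ω)) ∂Q (A ω)) /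
            (∫ s, g s / h s (A ω) ∂Q (A ω)) ∂P
        = ∫ ω in B, ((∫ s, ψp s * (g s / h s (A ω)) ∂Q (A ω)) /
            (∫ s, g s / h s (A ω) ∂Q (A ω))
            - (∫ s, ψm s * (g s / h s (A ω)) ∂Q (A ω)) /
              (∫ s, g s / h s (A ω) ∂Q (A ω))) ∂P :=
          integral_congr_ae (ae_restrict_of_ae hTdec)
      _ = (∫ ω in B, (∫ s, ψp s * (g s / h s (A ω)) ∂Q (A ω)) /
            (∫ s, g s / h s (A ω) ∂Q (A ω)) ∂P)
          - ∫ ω in B, (∫ s, ψm s * (g s / h s (A ω)) ∂Q (A ω)) /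
            (∫ s, g s / h s (A ω) ∂Q (A ω)) ∂P := integral_sub hip him
      _ = (∫ ω in B, ψp (S ω) ∂P) - ∫ ω in B, ψm (S ω) ∂P := by
          rw [hψeq ψp vp hψpm hψp0 hψpC hvpm hvpae hvpset B hBm',
            hψeq ψm vm hψmm hψm0 hψmC hvmm hvmae hvmset B hBm']
      _ = ∫ ω in B, (ψp (S ω) - ψm (S ω)) ∂P := (integral_sub hintp hintm).symm
      _ = ∫ ω in B, F (S ω) ∂P := by
          refine integral_congr_ae (ae_restrict_of_ae (Filter.Eventually.of_forall
            fun ω => ?_))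
          exact (hFdec (S ω)).symm
  haveI : SigmaFinite (P.trim hm') := by
    haveI := isFiniteMeasure_trim (μ := P) hm'
    infer_instance
  exact (ae_eq_condExp_of_forall_setIntegral_eq hm' hFSint
    (fun B hBm' _ => hRint.integrableOn) heq hRsm').symm
end

section
/- Suppose for each n, (S_n, A_n) are random variables in a product of Polish spaces with (S_n, A_n) → (S, A) almost surely, and suppose the conditional law of S_n given A_n equals κ_n(A_n, ·) where the kernels satisfy: almost surely, κ_n(A_n, ·) converges weakly to a kernel value κ(A, ·). Then the conditional law of S given A is κ(A, ·). -/
open MeasureTheory ProbabilityTheory Filter BoundedContinuousFunction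

/-- The map `a ↦ ∫ x, F x ∂(κ a)` is strongly measurable for a kernel `κ`. -/
private lemma kernel_integral_stronglyMeasurable {𝒜 𝒮 : Type*} [MeasurableSpace 𝒜]
    [TopologicalSpace 𝒮] [MeasurableSpace 𝒮] [OpensMeasurableSpace 𝒮]
    (κ : Kernel 𝒜 𝒮) [IsSFiniteKernel κ] (F : 𝒮 →ᵇ ℝ) :
    StronglyMeasurable fun a => ∫ x, F x ∂κ a :=
  MeasureTheory.StronglyMeasurable.integral_kernel_prod_right
    (f := fun _ x => F x) ((F.continuous.measurable.comp measurable_snd).stronglyMeasurable)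

/-- Bound for kernel integrals of bounded continuous functions. -/
private lemma kernel_integral_norm_le {𝒜 𝒮 : Type*} [MeasurableSpace 𝒜]
    [TopologicalSpace 𝒮] [MeasurableSpace 𝒮]
    (κ : Kernel 𝒜 𝒮) [IsMarkovKernel κ] (F : 𝒮 →ᵇ ℝ) (a : 𝒜) :
    ‖∫ x, F x ∂κ a‖ ≤ ‖F‖ := by
  calc ‖∫ x, F x ∂κ a‖ ≤ ‖F‖ * ((κ a) Set.univ).toReal :=
        norm_integral_le_of_norm_le_const (Eventually.of_forall fun x => F.norm_coe_le_norm x)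
    _ = ‖F‖ := by simp

/-- **Convergence of conditional distributions.** Suppose `(S_n, A_n) → (S, A)` almost
surely in a product of Polish spaces, the conditional law of `S_n` given `A_n` is
`κ_n(A_n, ·)` for Markov kernels `κ_n`, and almost surely `κ_n(A_n, ·) → κ(A, ·)` weakly.
Then the conditional law of `S` given `A` is `κ(A, ·)`: for every bounded continuous `F`,
`E[F(S) | σ(A)] = ∫ F dκ(A, ·)` almost surely. -/
theorem conditional_law_of_limit
    {Ω 𝒮 𝒜 : Type*} [MeasurableSpace Ω]
    [TopologicalSpace 𝒮] [PolishSpace 𝒮] [MeasurableSpace 𝒮] [BorelSpace 𝒮]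
    [TopologicalSpace 𝒜] [PolishSpace 𝒜] [MeasurableSpace 𝒜] [BorelSpace 𝒜]
    (P : Measure Ω) [IsProbabilityMeasure P]
    (S : ℕ → Ω → 𝒮) (A : ℕ → Ω → 𝒜) (Slim : Ω → 𝒮) (Alim : Ω → 𝒜)
    (hS : ∀ n, Measurable (S n)) (hA : ∀ n, Measurable (A n))
    (hSlim : Measurable Slim) (hAlim : Measurable Alim)
    (κn : ℕ → Kernel 𝒜 𝒮) (κ : Kernel 𝒜 𝒮)
    [∀ n, IsMarkovKernel (κn n)] [IsMarkovKernel κ]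
    -- almost sure convergence `(S_n, A_n) → (S, A)`:
    (hconv : ∀ᵐ ω ∂P, Tendsto (fun n => (S n ω, A n ω)) atTop (nhds (Slim ω, Alim ω)))
    -- the conditional law of `S_n` given `A_n` is `κ_n(A_n, ·)`:
    (hcond : ∀ n, ∀ F : 𝒮 →ᵇ ℝ,
      P[fun ω => F (S n ω) | MeasurableSpace.comap (A n) inferInstance]
        =ᵐ[P] fun ω => ∫ x, F x ∂(κn n (A n ω)))
    -- almost surely `κ_n(A_n, ·) → κ(A, ·)` weakly:
    (hκconv : ∀ᵐ ω ∂P, ∀ F : 𝒮 →ᵇ ℝ,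
      Tendsto (fun n => ∫ x, F x ∂(κn n (A n ω))) atTop
        (nhds (∫ x, F x ∂(κ (Alim ω))))) :
    ∀ F : 𝒮 →ᵇ ℝ,
      P[fun ω => F (Slim ω) | MeasurableSpace.comap Alim inferInstance]
        =ᵐ[P] fun ω => ∫ x, F x ∂(κ (Alim ω)) := by
  -- integrability of bounded continuous compositions
  have intS : ∀ (F : 𝒮 →ᵇ ℝ) (X : Ω → 𝒮), Measurable X →
      Integrable (fun ω => F (X ω)) P := fun F X hX =>
    ⟨(F.continuous.measurable.comp hX).aestronglyMeasurable,
      HasFiniteIntegral.of_bounded (C := ‖F‖)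
        (Eventually.of_forall fun ω => F.norm_coe_le_norm _)⟩
  have intA : ∀ (G : 𝒜 →ᵇ ℝ) (X : Ω → 𝒜), Measurable X →
      Integrable (fun ω => G (X ω)) P := fun G X hX =>
    ⟨(G.continuous.measurable.comp hX).aestronglyMeasurable,
      HasFiniteIntegral.of_bounded (C := ‖G‖)
        (Eventually.of_forall fun ω => G.norm_coe_le_norm _)⟩
  have hm : MeasurableSpace.comap Alim inferInstance ≤ (inferInstance : MeasurableSpace Ω) :=
    hAlim.comap_le
  -- reduce to the case of nonnegative F
  suffices key : ∀ F : 𝒮 →ᵇ ℝ, (∀ x, 0 ≤ F x) →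
      P[fun ω => F (Slim ω) | MeasurableSpace.comap Alim inferInstance]
        =ᵐ[P] fun ω => ∫ x, F x ∂(κ (Alim ω)) by
    intro F
    set c : ℝ := ‖F‖ with hc
    have hF'nn : ∀ x, 0 ≤ (F + BoundedContinuousFunction.const 𝒮 c) x := by
      intro x
      have h := F.norm_coe_le_norm x
      rw [Real.norm_eq_abs] at h
      have h1 := (abs_le.mp h).1
      simp only [BoundedContinuousFunction.coe_add, BoundedContinuousFunction.const_apply,
        Pi.add_apply]
      linarith
    have hk := key (F + BoundedContinuousFunction.const 𝒮 c) hF'nn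
    have hfun : (fun ω => (F + BoundedContinuousFunction.const 𝒮 c) (Slim ω))
        = fun ω => F (Slim ω) + c := by
      funext ω; simp
    rw [hfun] at hk
    have e2 : ∀ a : 𝒜, (∫ x, (F + BoundedContinuousFunction.const 𝒮 c) x ∂κ a)
        = (∫ x, F x ∂κ a) + c := by
      intro a
      have : (fun x => (F + BoundedContinuousFunction.const 𝒮 c) x)
          = fun x => F x + c := by funext x; simp
      rw [this, integral_add (F.integrable _) (integrable_const c), integral_const]
      simp
    have e3 : P[fun ω => F (Slim ω) + c | MeasurableSpace.comap Alim inferInstance]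
        =ᵐ[P] (P[fun ω => F (Slim ω) | MeasurableSpace.comap Alim inferInstance]
          + fun _ => c) := by
      have h1 := condExp_add (μ := P) (m := MeasurableSpace.comap Alim inferInstance)
        (intS F Slim hSlim) (integrable_const c)
      have h2 := condExp_const hm c (μ := P)
      filter_upwards [h1] with ω hω
      have : (fun ω => F (Slim ω) + c)
          = (fun ω => F (Slim ω)) + fun _ => c := rfl
      rw [this, hω, h2]
    filter_upwards [hk, e3] with ω h1 h2
    have : (P[fun ω => F (Slim ω) | MeasurableSpace.comap Alim inferInstance]) ω + c
        = (∫ x, F x ∂κ (Alim ω)) + c := by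
      rw [← e2 (Alim ω), ← h1, h2]; rfl
    linarith
  intro F hFnn
  -- strong measurability of kernel integrals
  have hκSM : StronglyMeasurable fun a => ∫ x, F x ∂κ a :=
    kernel_integral_stronglyMeasurable κ F
  have hκnSM : ∀ n, StronglyMeasurable fun a => ∫ x, F x ∂κn n a :=
    fun n => kernel_integral_stronglyMeasurable (κn n) F
  have hgm0 : Measurable fun ω => ∫ x, F x ∂κ (Alim ω) := hκSM.measurable.comp hAlim
  have hgint : Integrable (fun ω => ∫ x, F x ∂κ (Alim ω)) P :=
    ⟨hgm0.aestronglyMeasurable,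
      HasFiniteIntegral.of_bounded (C := ‖F‖)
        (Eventually.of_forall fun ω => kernel_integral_norm_le κ F (Alim ω))⟩
  have hfint : Integrable (fun ω => F (Slim ω)) P := intS F Slim hSlim
  -- Step A : equality of integrals against bounded continuous test functions of Alim
  have stepA : ∀ G : 𝒜 →ᵇ ℝ,
      ∫ ω, F (Slim ω) * G (Alim ω) ∂P
        = ∫ ω, (∫ x, F x ∂κ (Alim ω)) * G (Alim ω) ∂P := by
    intro G
    have h1 : Tendsto (fun n => ∫ ω, F (S n ω) * G (A n ω) ∂P) atTop
        (nhds (∫ ω, F (Slim ω) * G (Alim ω) ∂P)) := by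
      refine tendsto_integral_of_dominated_convergence (fun _ => ‖F‖ * ‖G‖) ?_ ?_ ?_ ?_
      · intro n
        exact ((F.continuous.measurable.comp (hS n)).mul
          (G.continuous.measurable.comp (hA n))).aestronglyMeasurable
      · exact integrable_const _
      · intro n
        refine Eventually.of_forall fun ω => ?_
        rw [norm_mul]
        exact mul_le_mul (F.norm_coe_le_norm _) (G.norm_coe_le_norm _)
          (norm_nonneg _) (norm_nonneg _)
      · filter_upwards [hconv] with ω hω
        have hSconv : Tendsto (fun n => S n ω) atTop (nhds (Slim ω)) :=
          (continuous_fst.tendsto _).comp hω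
        have hAconv : Tendsto (fun n => A n ω) atTop (nhds (Alim ω)) :=
          (continuous_snd.tendsto _).comp hω
        exact ((F.continuous.tendsto _).comp hSconv).mul
          ((G.continuous.tendsto _).comp hAconv)
    have h2 : ∀ n, ∫ ω, F (S n ω) * G (A n ω) ∂P
        = ∫ ω, (∫ x, F x ∂κn n (A n ω)) * G (A n ω) ∂P := by
      intro n
      have hmn : MeasurableSpace.comap (A n) inferInstance
          ≤ (inferInstance : MeasurableSpace Ω) := (hA n).comap_le
      have hGm : StronglyMeasurable[MeasurableSpace.comap (A n) inferInstance]
          fun ω => G (A n ω) :=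
        (G.continuous.measurable.comp (measurable_iff_comap_le.mpr le_rfl)).stronglyMeasurable
      have hfintn : Integrable (fun ω => F (S n ω)) P := intS F (S n) (hS n)
      have hprod : Integrable ((fun ω => G (A n ω)) * fun ω => F (S n ω)) P := by
        refine ⟨((G.continuous.measurable.comp (hA n)).mul
          (F.continuous.measurable.comp (hS n))).aestronglyMeasurable, ?_⟩
        refine HasFiniteIntegral.of_bounded (C := ‖G‖ * ‖F‖)
          (Eventually.of_forall fun ω => ?_)
        simp only [Pi.mul_apply, norm_mul]
        exact mul_le_mul (G.norm_coe_le_norm _) (F.norm_coe_le_norm _)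
          (norm_nonneg _) (norm_nonneg _)
      calc ∫ ω, F (S n ω) * G (A n ω) ∂P
          = ∫ ω, ((fun ω => G (A n ω)) * fun ω => F (S n ω)) ω ∂P := by
            refine integral_congr_ae (Eventually.of_forall fun ω => ?_)
            simp [mul_comm]
        _ = ∫ ω, (P[(fun ω => G (A n ω)) * fun ω => F (S n ω)
              | MeasurableSpace.comap (A n) inferInstance]) ω ∂P :=
            (integral_condExp hmn).symm
        _ = ∫ ω, (∫ x, F x ∂κn n (A n ω)) * G (A n ω) ∂P := by
            refine integral_congr_ae ?_
            filter_upwards [condExp_mul_of_stronglyMeasurable_left hGm hprod hfintn, hcond n F]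
              with ω hω1 hω2
            rw [hω1]
            simp only [Pi.mul_apply]
            rw [hω2]
            ring
    have h3 : Tendsto (fun n => ∫ ω, (∫ x, F x ∂κn n (A n ω)) * G (A n ω) ∂P) atTop
        (nhds (∫ ω, (∫ x, F x ∂κ (Alim ω)) * G (Alim ω) ∂P)) := by
      refine tendsto_integral_of_dominated_convergence (fun _ => ‖F‖ * ‖G‖) ?_ ?_ ?_ ?_
      · intro n
        exact (((hκnSM n).measurable.comp (hA n)).mul
          (G.continuous.measurable.comp (hA n))).aestronglyMeasurable
      · exact integrable_const _
      · intro n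
        refine Eventually.of_forall fun ω => ?_
        rw [norm_mul]
        exact mul_le_mul (kernel_integral_norm_le (κn n) F (A n ω)) (G.norm_coe_le_norm _)
          (norm_nonneg _) (norm_nonneg _)
      · filter_upwards [hκconv, hconv] with ω hω1 hω2
        have hAconv : Tendsto (fun n => A n ω) atTop (nhds (Alim ω)) :=
          (continuous_snd.tendsto _).comp hω2
        exact (hω1 F).mul ((G.continuous.tendsto _).comp hAconv)
    exact tendsto_nhds_unique h1 (h3.congr fun n => (h2 n).symm)
  -- Step B : the two finite measures on 𝒜 agree
  set d1 : Ω → ENNReal := fun ω => ENNReal.ofReal (F (Slim ω)) with hd1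
  set d2 : Ω → ENNReal := fun ω => ENNReal.ofReal (∫ x, F x ∂κ (Alim ω)) with hd2
  have hd1m : Measurable d1 := (F.continuous.measurable.comp hSlim).ennreal_ofReal
  have hd2m : Measurable d2 := hgm0.ennreal_ofReal
  set μ1 : Measure 𝒜 := Measure.map Alim (P.withDensity d1) with hμ1
  set μ2 : Measure 𝒜 := Measure.map Alim (P.withDensity d2) with hμ2
  have hd1bdd : ∀ ω, d1 ω ≤ ENNReal.ofReal ‖F‖ := fun ω =>
    ENNReal.ofReal_le_ofReal (le_trans (le_abs_self _)
      (by simpa [Real.norm_eq_abs] using F.norm_coe_le_norm (Slim ω)))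
  have hd2bdd : ∀ ω, d2 ω ≤ ENNReal.ofReal ‖F‖ := fun ω =>
    ENNReal.ofReal_le_ofReal (le_trans (le_abs_self _)
      (by simpa [Real.norm_eq_abs] using kernel_integral_norm_le κ F (Alim ω)))
  have finaux : ∀ d : Ω → ENNReal, (∀ ω, d ω ≤ ENNReal.ofReal ‖F‖) →
      IsFiniteMeasure (Measure.map Alim (P.withDensity d)) := by
    intro d hd
    constructor
    rw [Measure.map_apply hAlim MeasurableSet.univ, Set.preimage_univ,
      withDensity_apply _ MeasurableSet.univ, setLIntegral_univ]
    calc ∫⁻ ω, d ω ∂P ≤ ∫⁻ _, ENNReal.ofReal ‖F‖ ∂P := lintegral_mono hd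
      _ = ENNReal.ofReal ‖F‖ := by simp
      _ < ⊤ := ENNReal.ofReal_lt_top
  haveI hfin1 : IsFiniteMeasure μ1 := finaux d1 hd1bdd
  haveI hfin2 : IsFiniteMeasure μ2 := finaux d2 hd2bdd
  have lipcoe : LipschitzWith 1 (fun x : NNReal => (x : ℝ)) :=
    LipschitzWith.of_dist_le_mul fun x y => by
      rw [NNReal.dist_eq, Real.dist_eq]; simp
  have hμeq : μ1 = μ2 := by
    apply ext_of_forall_lintegral_eq_of_IsFiniteMeasure
    intro f
    set G : 𝒜 →ᵇ ℝ := f.comp (fun x : NNReal => (x : ℝ)) lipcoe with hG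
    have hGapp : ∀ a, G a = (f a : ℝ) := fun a => rfl
    have hGnn : ∀ a, 0 ≤ G a := fun a => (f a).coe_nonneg
    have lintaux : ∀ (d : Ω → ENNReal) (h : Ω → ℝ), Measurable d →
        (∀ ω, d ω = ENNReal.ofReal (h ω)) → Integrable h P → (∀ ω, 0 ≤ h ω) →
        ∫⁻ a, (f a : ENNReal) ∂(Measure.map Alim (P.withDensity d))
          = ENNReal.ofReal (∫ ω, h ω * G (Alim ω) ∂P) := by
      intro d h hdm hdh hint hnn
      have hfm : Measurable fun a : 𝒜 => (f a : ENNReal) := by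
        exact measurable_coe_nnreal_ennreal.comp f.continuous.measurable
      have hfm2 : Measurable fun ω : Ω => (f (Alim ω) : ENNReal) := hfm.comp hAlim
      rw [lintegral_map hfm hAlim, lintegral_withDensity_eq_lintegral_mul _ hdm hfm2]
      have hintmul : Integrable (fun ω => h ω * G (Alim ω)) P := by
        have h' := hint.bdd_mul (G.continuous.measurable.comp hAlim).aestronglyMeasurable
          (c := ‖G‖) (Eventually.of_forall fun ω => G.norm_coe_le_norm _)
        simpa [Function.comp, mul_comm] using h'
      rw [ofReal_integral_eq_lintegral_ofReal hintmul
        (Eventually.of_forall fun ω => mul_nonneg (hnn ω) (hGnn _))]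
      refine lintegral_congr fun ω => ?_
      simp only [Pi.mul_apply]
      rw [ENNReal.ofReal_mul (hnn ω), ← hdh ω, hGapp]
      congr 1
      exact ENNReal.ofReal_coe_nnreal.symm
    rw [hμ1, hμ2,
      lintaux d1 (fun ω => F (Slim ω)) hd1m (fun _ => rfl) hfint (fun ω => hFnn (Slim ω)),
      lintaux d2 (fun ω => ∫ x, F x ∂κ (Alim ω)) hd2m (fun _ => rfl) hgint
        (fun ω => integral_nonneg fun x => hFnn x),
      stepA G]
  -- Step C : conclude via uniqueness of conditional expectation
  have hgSM : StronglyMeasurable[MeasurableSpace.comap Alim inferInstance]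
      fun ω => ∫ x, F x ∂κ (Alim ω) :=
    hκSM.comp_measurable (measurable_iff_comap_le.mpr le_rfl)
  refine (ae_eq_condExp_of_forall_setIntegral_eq hm hfint
    (fun s _ _ => hgint.integrableOn) ?_ hgSM.aestronglyMeasurable).symm
  rintro s ⟨B, hB, rfl⟩ -
  have hsm : MeasurableSet (Alim ⁻¹' B) := hAlim hB
  have aux : ∀ (d : Ω → ENNReal) (h : Ω → ℝ), Measurable d →
      (∀ ω, d ω = ENNReal.ofReal (h ω)) → (∀ ω, 0 ≤ h ω) → AEStronglyMeasurable h P →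
      ∫ ω in Alim ⁻¹' B, h ω ∂P
        = ((Measure.map Alim (P.withDensity d)) B).toReal := by
    intro d h hdm hdh hnn hsm'
    rw [Measure.map_apply hAlim hB, withDensity_apply _ hsm]
    rw [integral_eq_lintegral_of_nonneg_ae (Eventually.of_forall fun ω => hnn ω)
      hsm'.restrict]
    congr 1
    refine lintegral_congr fun ω => (hdh ω).symm
  rw [aux d1 (fun ω => F (Slim ω)) hd1m (fun _ => rfl) (fun ω => hFnn (Slim ω))
      hfint.aestronglyMeasurable,
    aux d2 (fun ω => ∫ x, F x ∂κ (Alim ω)) hd2m (fun _ => rfl)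
      (fun ω => integral_nonneg fun x => hFnn x) hgint.aestronglyMeasurable,
    ← hμ1, ← hμ2, hμeq]
end
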